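/- (Han's inequality, continuous version, N = 2, symmetric case) Let γ(v₁,v₂) = g(v₁)g(v₂) be a product probability density on ℝ², and let h ≥ 0 with ∫hγ = 1 be symmetric in (v₁,v₂). Let P₁h(v₂) = ∫h(w,v₂)g(w)dw. Then S(P₁h) ≤ (1/2)S(h), where S(u) = ∫ u log u γ. -/

import Mathlib

open MeasureTheory Real

set_option maxHeartbeats 1000000 in
/-- Han's inequality, N = 2, symmetric case: For a product
probability density γ(v₁,v₂) = g(v₁)g(v₂) and a symmetric probability density h
w.r.t. γ, the marginal P₁h(v₂) = ∫h(w,v₂)g(w)dw satisfies S(P₁h) ≤ (1/2)S(h). -/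
theorem han_inequality_two_symmetric (g : ℝ → ℝ) (hg0 : ∀ v, 0 ≤ g v)
    (hg1 : ∫ v : ℝ, g v = 1)
    (h : ℝ → ℝ → ℝ) (hh0 : ∀ x y, 0 ≤ h x y) (hsym : ∀ x y, h x y = h y x)
    (hnorm : ∫ p : ℝ × ℝ, h p.1 p.2 * (g p.1 * g p.2) = 1)
    (hint : Integrable (fun p : ℝ × ℝ => h p.1 p.2 * Real.log (h p.1 p.2) * (g p.1 * g p.2)))
    (hint1 : Integrable (fun y : ℝ =>
      (∫ w : ℝ, h w y * g w) * Real.log (∫ w : ℝ, h w y * g w) * g y)) :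
    ∫ y : ℝ, (∫ w : ℝ, h w y * g w) * Real.log (∫ w : ℝ, h w y * g w) * g y
      ≤ (1 / 2) * ∫ p : ℝ × ℝ, h p.1 p.2 * Real.log (h p.1 p.2) * (g p.1 * g p.2) := by
  classical
  set P : Measure (ℝ × ℝ) := (volume : Measure ℝ).prod volume with hPdef
  have vol2 : (volume : Measure (ℝ × ℝ)) = P := rfl
  -- integrability of g and of the joint density
  have hgInt : Integrable g := by
    by_contra hc
    rw [integral_undef hc] at hg1; norm_num at hg1
  have hFInt : Integrable (fun p : ℝ × ℝ => h p.1 p.2 * (g p.1 * g p.2)) P := by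
    rw [← vol2]
    by_contra hc
    rw [integral_undef hc] at hnorm; norm_num at hnorm
  set F : ℝ × ℝ → ℝ := fun p => h p.1 p.2 * (g p.1 * g p.2) with hFdef
  have hFnorm : ∫ p, F p ∂P = 1 := hnorm
  have hF0 : ∀ p, 0 ≤ F p := fun p => mul_nonneg (hh0 _ _) (mul_nonneg (hg0 _) (hg0 _))
  have hFswap : ∀ p : ℝ × ℝ, F p.swap = F p := by
    intro p
    simp only [hFdef, Prod.fst_swap, Prod.snd_swap]
    rw [hsym p.2 p.1]; ring
  -- measurable nonnegative representatives
  set g2 : ℝ → ℝ := fun x => max (hgInt.1.mk g x) 0 with hg2def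
  have hg2M : Measurable g2 := hgInt.1.measurable_mk.max measurable_const
  have hg2ae : ∀ᵐ x ∂(volume : Measure ℝ), g x = g2 x := by
    filter_upwards [hgInt.1.ae_eq_mk] with x hx
    simp only [hg2def, ← hx, max_eq_left (hg0 x)]
  have hg20 : ∀ x, 0 ≤ g2 x := fun x => le_max_right _ _
  set F' : ℝ × ℝ → ℝ := hFInt.1.mk _ with hF'def
  have hF'M : Measurable F' := hFInt.1.measurable_mk
  set Fs : ℝ × ℝ → ℝ := fun p =>
    if g2 p.1 * g2 p.2 = 0 then 0 else max (min (F' p) (F' p.swap)) 0 with hFsdef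
  have hFsM : Measurable Fs := by
    refine Measurable.ite ?_ measurable_const ?_
    · exact ((hg2M.comp measurable_fst).mul (hg2M.comp measurable_snd)) (measurableSet_singleton 0)
    · exact (hF'M.min (hF'M.comp measurable_swap)).max measurable_const
  have hFs0 : ∀ p, 0 ≤ Fs p := by
    intro p; simp only [hFsdef]
    split
    · exact le_refl 0
    · exact le_max_right _ _
  have hFsswap : ∀ p : ℝ × ℝ, Fs p.swap = Fs p := by
    intro p
    simp only [hFsdef, Prod.fst_swap, Prod.snd_swap, Prod.swap_swap]
    rw [mul_comm (g2 p.2) (g2 p.1), min_comm]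
  have hFszero : ∀ p : ℝ × ℝ, g2 p.1 * g2 p.2 = 0 → Fs p = 0 := by
    intro p hz; simp only [hFsdef, if_pos hz]
  -- lifts of a.e. statements to the product
  have haeg1 : ∀ᵐ p : ℝ × ℝ ∂P, g p.1 = g2 p.1 :=
    Measure.quasiMeasurePreserving_fst.ae hg2ae
  have haeg2 : ∀ᵐ p : ℝ × ℝ ∂P, g p.2 = g2 p.2 :=
    Measure.quasiMeasurePreserving_snd.ae hg2ae
  have hswapQMP : Measure.QuasiMeasurePreserving (Prod.swap : ℝ × ℝ → ℝ × ℝ) P P :=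
    Measure.measurePreserving_swap.quasiMeasurePreserving
  have hFs_ae : ∀ᵐ p ∂P, F p = Fs p := by
    have hae1 : ∀ᵐ p ∂P, F p = F' p := hFInt.1.ae_eq_mk
    have hae2 : ∀ᵐ p ∂P, F p.swap = F' p.swap := hswapQMP.ae hae1
    filter_upwards [hae1, hae2, haeg1, haeg2] with p h1 h2' hx1 hx2
    by_cases hz : g2 p.1 * g2 p.2 = 0
    · rw [hFszero p hz]
      simp only [hFdef]
      rw [hx1, hx2, hz, mul_zero]
    · simp only [hFsdef, if_neg hz]
      rw [← h1, ← h2', hFswap, min_self, max_eq_left (hF0 p)]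
  have hFsInt : Integrable Fs P := hFInt.congr hFs_ae
  have hFsnorm : ∫ p, Fs p ∂P = 1 := by
    rw [← integral_congr_ae hFs_ae]; exact hFnorm
  -- the measurable density and marginal
  set h2 : ℝ → ℝ → ℝ := fun x y => Fs (x, y) / (g2 x * g2 y) with hh2def
  have hh2M : Measurable (fun p : ℝ × ℝ => h2 p.1 p.2) := by
    simp only [hh2def]
    exact hFsM.div ((hg2M.comp measurable_fst).mul (hg2M.comp measurable_snd))
  have hh20 : ∀ x y, 0 ≤ h2 x y := fun x y =>
    div_nonneg (hFs0 _) (mul_nonneg (hg20 _) (hg20 _))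
  have hh2sym : ∀ x y, h2 x y = h2 y x := by
    intro x y
    simp only [hh2def]
    rw [show ((x, y) : ℝ × ℝ) = (y, x).swap from rfl, hFsswap, mul_comm]
  have hkey : ∀ x y : ℝ, h2 x y * (g2 x * g2 y) = Fs (x, y) := by
    intro x y
    by_cases hz : g2 x * g2 y = 0
    · rw [hz, mul_zero, hFszero (x, y) hz]
    · simp only [hh2def]; exact div_mul_cancel₀ _ hz
  have hkeyp : ∀ p : ℝ × ℝ, h2 p.1 p.2 * (g2 p.1 * g2 p.2) = Fs p := fun p => hkey p.1 p.2
  set m : ℝ → ℝ := fun y => ∫ x, h2 x y * g2 x with hmdef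
  have hmM : Measurable m := by
    have : StronglyMeasurable (fun p : ℝ × ℝ => h2 p.1 p.2 * g2 p.1) :=
      (hh2M.mul (hg2M.comp measurable_fst)).stronglyMeasurable
    exact this.integral_prod_left'.measurable
  have hm0 : ∀ y, 0 ≤ m y := fun y =>
    integral_nonneg fun x => mul_nonneg (hh20 _ _) (hg20 _)
  have hMf : ∀ y, (∫ x, Fs (x, y)) = m y * g2 y := by
    intro y
    rw [hmdef]
    rw [← integral_mul_const]
    congr 1 with x
    rw [mul_assoc, hkey]
  have hMInt : Integrable (fun y => m y * g2 y) (volume : Measure ℝ) := by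
    refine (hFsInt.integral_prod_right).congr (Filter.Eventually.of_forall fun y => ?_)
    exact hMf y
  have hMnorm : ∫ y, m y * g2 y = 1 := by
    rw [← funext hMf, ← integral_prod_symm _ hFsInt, hFsnorm]
  -- transfer of the marginal entropy integrand
  have hyx : ∀ᵐ y ∂(volume : Measure ℝ), ∀ᵐ x ∂(volume : Measure ℝ),
      F (x, y) = Fs (x, y) ∧ g x = g2 x := by
    have hS : ∀ᵐ p ∂P, F p = Fs p ∧ g p.1 = g2 p.1 := hFs_ae.and haeg1
    have hS' : ∀ᵐ p ∂P, F p.swap = Fs p.swap ∧ g p.2 = g2 p.2 := hswapQMP.ae hS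
    exact Measure.ae_ae_of_ae_prod hS'
  have eq_marg : ∀ᵐ y ∂(volume : Measure ℝ),
      (∫ w, h w y * g w) * Real.log (∫ w, h w y * g w) * g y
        = m y * Real.log (m y) * g2 y := by
    filter_upwards [hyx, hg2ae] with y hy hgy
    by_cases hz : g2 y = 0
    · rw [hgy, hz, mul_zero, mul_zero]
    · have hgy' : g y ≠ 0 := by rw [hgy]; exact hz
      have marg_eq : (∫ w, h w y * g w) = m y := by
        rw [hmdef]
        refine integral_congr_ae ?_
        filter_upwards [hy] with x hx
        obtain ⟨hx1, hx2⟩ := hx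
        by_cases hzx : g2 x = 0
        · rw [hx2, hzx, mul_zero, mul_zero]
        · have e1 : h x y * g x = F (x, y) / g y := by
            simp only [hFdef]
            field_simp
          have e2 : h2 x y * g2 x = Fs (x, y) / g2 y := by
            have hk := hkey x y
            rw [← hk]
            field_simp
          rw [e1, e2, hx1, hgy]
      rw [marg_eq, hgy]
  have hLHSeq : (∫ y, (∫ w, h w y * g w) * Real.log (∫ w, h w y * g w) * g y)
      = ∫ y, m y * Real.log (m y) * g2 y := integral_congr_ae eq_marg
  have hT2yInt : Integrable (fun y => m y * Real.log (m y) * g2 y) (volume : Measure ℝ) :=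
    hint1.congr eq_marg
  -- transfer of the joint entropy integrand
  have eqT1 : ∀ᵐ p ∂P, h p.1 p.2 * Real.log (h p.1 p.2) * (g p.1 * g p.2)
      = Fs p * Real.log (h2 p.1 p.2) := by
    filter_upwards [hFs_ae, haeg1, haeg2] with p h1 hx1 hx2
    by_cases hz : g2 p.1 * g2 p.2 = 0
    · rw [hFszero p hz, zero_mul, hx1, hx2, hz, mul_zero]
    · have hh : h p.1 p.2 = h2 p.1 p.2 := by
        have e1 : h p.1 p.2 * (g2 p.1 * g2 p.2) = Fs p := by
          rw [← hx1, ← hx2, ← h1]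
        have e2 := hkeyp p
        have := e1.trans e2.symm
        exact mul_right_cancel₀ hz this
      rw [hx1, hx2, hh, mul_right_comm, hkeyp]
  have hT1Int : Integrable (fun p => Fs p * Real.log (h2 p.1 p.2)) P := by
    refine (Integrable.congr ?_ eqT1)
    rw [← vol2]; exact hint
  have hT1val : (∫ p : ℝ × ℝ, h p.1 p.2 * Real.log (h p.1 p.2) * (g p.1 * g p.2))
      = ∫ p, Fs p * Real.log (h2 p.1 p.2) ∂P := integral_congr_ae eqT1
  -- T2
  set T2 : ℝ × ℝ → ℝ := fun p => Fs p * Real.log (m p.2) with hT2def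
  have hT2Int : Integrable T2 P := by
    have hsm : AEStronglyMeasurable T2 P :=
      (hFsM.mul (Real.measurable_log.comp (hmM.comp measurable_snd))).aestronglyMeasurable
    refine (integrable_prod_iff' hsm).2 ⟨?_, ?_⟩
    · filter_upwards [hFsInt.prod_left_ae] with y hy
      simp only [hT2def]
      exact hy.mul_const _
    · have heq : ∀ y, (∫ x, ‖T2 (x, y)‖) = |m y * Real.log (m y) * g2 y| := by
        intro y
        have e : ∀ x, ‖T2 (x, y)‖ = |Real.log (m y)| * Fs (x, y) := by
          intro x
          simp only [hT2def, Real.norm_eq_abs, abs_mul, abs_of_nonneg (hFs0 _)]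
          ring
        rw [funext e, integral_const_mul, hMf]
        rw [abs_mul, abs_mul, abs_of_nonneg (hm0 y), abs_of_nonneg (hg20 y)]
        ring
      refine (hT2yInt.abs).congr (Filter.Eventually.of_forall fun y => (heq y).symm)
  have hT2val : ∫ p, T2 p ∂P = ∫ y, m y * Real.log (m y) * g2 y := by
    rw [integral_prod_symm _ hT2Int]
    refine integral_congr_ae (Filter.Eventually.of_forall fun y => ?_)
    simp only [hT2def]
    rw [integral_mul_const, hMf]
    ring
  -- T3
  set T3 : ℝ × ℝ → ℝ := fun p => Fs p * Real.log (m p.1) with hT3def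
  have hT23 : ∀ p : ℝ × ℝ, T2 p.swap = T3 p := by
    intro p
    simp only [hT2def, hT3def, Prod.snd_swap, hFsswap]
  have hT3Int : Integrable T3 P := by
    refine (hT2Int.swap).congr (Filter.Eventually.of_forall fun p => ?_)
    exact hT23 p
  have hT3val : ∫ p, T3 p ∂P = ∫ p, T2 p ∂P :=
    calc ∫ p, T3 p ∂P = ∫ p, T2 p.swap ∂P :=
          integral_congr_ae (Filter.Eventually.of_forall fun p => (hT23 p).symm)
      _ = ∫ p, T2 p ∂P := integral_prod_swap T2
  -- T5
  set T5 : ℝ × ℝ → ℝ := fun p => (m p.1 * g2 p.1) * (m p.2 * g2 p.2) with hT5def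
  have hT5Int : Integrable T5 P := hMInt.mul_prod hMInt
  have hT5val : ∫ p, T5 p ∂P = 1 := by
    have h5 := integral_prod_mul (μ := (volume : Measure ℝ)) (ν := (volume : Measure ℝ))
      (fun a => m a * g2 a) (fun a => m a * g2 a)
    rw [hMnorm] at h5
    norm_num at h5
    exact h5
  -- a.e. nonvanishing of the marginals where Fs ≠ 0
  set k : ℝ × ℝ → ℝ := fun p => h2 p.1 p.2 * g2 p.1 with hkdef
  have hkM : Measurable k := hh2M.mul (hg2M.comp measurable_fst)
  have hk0 : ∀ p, 0 ≤ k p := fun p => mul_nonneg (hh20 _ _) (hg20 _)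
  have hkFs : ∀ p : ℝ × ℝ, k p * g2 p.2 = Fs p := by
    intro p
    simp only [hkdef]
    rw [mul_assoc]
    exact hkeyp p
  have sliceInt : ∀ᵐ y ∂(volume : Measure ℝ),
      g2 y ≠ 0 → Integrable (fun x => k (x, y)) volume := by
    filter_upwards [hFsInt.prod_left_ae] with y hy hne
    refine (hy.div_const (g2 y)).congr (Filter.Eventually.of_forall fun x => ?_)
    show Fs (x, y) / g2 y = k (x, y)
    rw [← hkFs (x, y)]
    exact mul_div_cancel_right₀ _ hne
  have hm2pos : ∀ᵐ p ∂P, Fs p ≠ 0 → m p.2 ≠ 0 := by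
    set A : Set ℝ := {y | Integrable (fun x => k (x, y)) volume ∧ m y = 0} with hAdef
    have hAmeas : MeasurableSet A := by
      have h1 : MeasurableSet {y | Integrable (fun x => k (x, y)) volume} := by
        have : StronglyMeasurable (Function.uncurry fun (y x : ℝ) => k (x, y)) :=
          (hkM.comp measurable_swap).stronglyMeasurable
        exact measurableSet_integrable this
      exact h1.inter (hmM (measurableSet_singleton 0))
    have hAzero : ∀ y ∈ A, ∀ᵐ x ∂(volume : Measure ℝ), k (x, y) = 0 := by
      rintro y ⟨hyint, hym⟩
      have h0 : ∫ x, k (x, y) = 0 := hym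
      exact (integral_eq_zero_iff_of_nonneg (fun x => hk0 _) hyint).1 h0
    set N' : Set (ℝ × ℝ) := {q | q.1 ∈ A ∧ k q.swap ≠ 0} with hN'def
    have hN'meas : MeasurableSet N' := by
      refine MeasurableSet.inter (measurable_fst hAmeas) ?_
      exact ((hkM.comp measurable_swap) (measurableSet_singleton 0)).compl
    have hN' : P N' = 0 := by
      rw [hPdef, Measure.measure_prod_null hN'meas]
      refine Filter.Eventually.of_forall fun y => ?_
      simp only [Pi.zero_apply]
      by_cases hyA : y ∈ A
      · have := hAzero y hyA
        rw [ae_iff] at this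
        convert this using 2
        ext x
        simp only [hN'def, Set.mem_preimage, Set.mem_setOf_eq, Prod.swap_prod_mk, hyA, true_and]
      · convert measure_empty (μ := (volume : Measure ℝ))
        ext x
        simp only [hN'def, Set.mem_preimage, Set.mem_setOf_eq, hyA, false_and,
          Set.mem_empty_iff_false]
    have hN'ae : ∀ᵐ q ∂P, ¬(q.1 ∈ A ∧ k q.swap ≠ 0) := by
      rw [ae_iff]
      convert hN' using 2
      ext q
      simp only [hN'def, Set.mem_setOf_eq, not_not]
    have hN : ∀ᵐ p ∂P, ¬(p.2 ∈ A ∧ k p ≠ 0) := by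
      have := hswapQMP.ae hN'ae
      filter_upwards [this] with p hp
      simpa using hp
    have sliceIntP : ∀ᵐ p ∂P, g2 p.2 ≠ 0 → Integrable (fun x => k (x, p.2)) volume :=
      Measure.quasiMeasurePreserving_snd.ae sliceInt
    filter_upwards [hN, sliceIntP] with p hp1 hp2 hFsne
    have hg2ne : g2 p.2 ≠ 0 := fun hz => hFsne (by rw [← hkFs p, hz, mul_zero])
    have hkne : k p ≠ 0 := fun hz => hFsne (by rw [← hkFs p, hz, zero_mul])
    intro hm0'
    exact hp1 ⟨⟨hp2 hg2ne, hm0'⟩, hkne⟩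
  have hm1pos : ∀ᵐ p ∂P, Fs p ≠ 0 → m p.1 ≠ 0 := by
    have := hswapQMP.ae hm2pos
    filter_upwards [this] with p hp hne
    rw [hFsswap] at hp
    exact hp hne
  -- the pointwise Gibbs inequality
  have aeIneq : (fun p => Fs p - T5 p) ≤ᵐ[P]
      fun p => Fs p * Real.log (h2 p.1 p.2) - (T3 p + T2 p) := by
    filter_upwards [hm1pos, hm2pos] with p h1 h2'
    simp only [hT2def, hT3def, hT5def]
    by_cases hz : Fs p = 0
    · have hT5nn : 0 ≤ (m p.1 * g2 p.1) * (m p.2 * g2 p.2) :=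
        mul_nonneg (mul_nonneg (hm0 _) (hg20 _)) (mul_nonneg (hm0 _) (hg20 _))
      rw [hz]
      simp only [zero_mul, zero_sub, add_zero, sub_zero, zero_add]
      linarith
    · have hg2p : g2 p.1 * g2 p.2 ≠ 0 := fun hzz => hz (hFszero p hzz)
      have hc : 0 < g2 p.1 * g2 p.2 :=
        lt_of_le_of_ne (mul_nonneg (hg20 _) (hg20 _)) (Ne.symm hg2p)
      have hFsa : Fs p = h2 p.1 p.2 * (g2 p.1 * g2 p.2) := (hkeyp p).symm
      have ha : 0 < h2 p.1 p.2 := by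
        rcases lt_or_eq_of_le (hh20 p.1 p.2) with hlt | heq
        · exact hlt
        · exfalso; exact hz (by rw [hFsa, ← heq, zero_mul])
      have hm1p : 0 < m p.1 := lt_of_le_of_ne (hm0 _) (Ne.symm (h1 hz))
      have hm2p : 0 < m p.2 := lt_of_le_of_ne (hm0 _) (Ne.symm (h2' hz))
      have key : Real.log (m p.1 * m p.2 / h2 p.1 p.2) ≤ m p.1 * m p.2 / h2 p.1 p.2 - 1 :=
        Real.log_le_sub_one_of_pos (div_pos (mul_pos hm1p hm2p) ha)
      rw [Real.log_div (mul_pos hm1p hm2p).ne' ha.ne',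
        Real.log_mul hm1p.ne' hm2p.ne'] at key
      have key2 := mul_le_mul_of_nonneg_left key (hFs0 p)
      have e1 : Fs p * (m p.1 * m p.2 / h2 p.1 p.2) = (m p.1 * g2 p.1) * (m p.2 * g2 p.2) := by
        rw [hFsa]; field_simp
      rw [mul_sub, mul_sub, mul_add, e1, mul_one] at key2
      linarith
  -- put everything together
  have hT32 : Integrable (fun p => T3 p + T2 p) P := hT3Int.add hT2Int
  have main : ∫ p, (Fs p - T5 p) ∂P
      ≤ ∫ p, (Fs p * Real.log (h2 p.1 p.2) - (T3 p + T2 p)) ∂P :=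
    integral_mono_ae (hFsInt.sub hT5Int) (hT1Int.sub hT32) aeIneq
  rw [integral_sub hFsInt hT5Int, integral_sub hT1Int hT32,
    integral_add hT3Int hT2Int, hFsnorm, hT5val, hT3val, hT2val] at main
  rw [hLHSeq, hT1val]
  linarith
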